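/- Let G be a finite simple graph, let x be a vertex, let P be an x-fiber of G, let H be a connected component of G − V(P), and let k be the number of attachment points of H on P. Then there exists an independent set A of G with A ⊆ V(P) − {x}, |A| ≥ k, such that no edge of G joins a vertex of A and a vertex of H. -/

import Mathlib

open SimpleGraph

/-- `p` is an `x`-fiber of `G`: a longest path among all paths having `x` as an
endpoint. -/
def IsXFiber {V : Type} (G : SimpleGraph V) {x y : V} (p : G.Walk x y) : Prop :=
  p.IsPath ∧ ∀ (z : V) (q : G.Walk x z), q.IsPath → q.length ≤ p.length

/-- The attachment points on `p` of the component `C` of `G - V(p)`: the vertices of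
`p` having a neighbor in `C`. -/
def attachPoints {V : Type} (G : SimpleGraph V) {x y : V} (p : G.Walk x y)
    (C : (G.induce {v : V | v ∉ p.support}).ConnectedComponent) : Set V :=
  {s : V | s ∈ p.support ∧ ∃ h : {v : V | v ∉ p.support},
    (G.induce {v : V | v ∉ p.support}).connectedComponentMk h = C ∧ G.Adj ↑h s}

namespace XFiberAux

open SimpleGraph Walk

variable {V : Type} {G : SimpleGraph V} {x y : V}

lemma support_getElem : ∀ {u v : V} (p : G.Walk u v) (i : ℕ) (h : i < p.support.length),
    p.support[i] = p.getVert i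
  | _, _, .nil, 0, _ => rfl
  | _, _, .cons _ _, 0, _ => rfl
  | _, _, .cons a q, (i+1), h => by
      simpa using support_getElem q i (by rw [Walk.length_support]; simp at h; omega)

lemma getVert_inj {p : G.Walk x y} (hp : p.IsPath) {i j : ℕ}
    (hi : i ≤ p.length) (hj : j ≤ p.length) (hij : p.getVert i = p.getVert j) : i = j := by
  have hnd : p.support.Nodup := (Walk.isPath_def p).mp hp
  have hi' : i < p.support.length := by rw [Walk.length_support]; omega
  have hj' : j < p.support.length := by rw [Walk.length_support]; omega
  have : p.support[i]'hi' = p.support[j]'hj' := by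
    rw [support_getElem, support_getElem]; exact hij
  exact (List.Nodup.getElem_inj_iff hnd).mp this

/-- If `p.support = A ++ B` then `p.getVert i = A[i]` for `i < A.length`. -/
lemma getVert_split_left {p : G.Walk x y} {A B : List V} (hsplit : p.support = A ++ B)
    {i : ℕ} (hi : i < A.length) : p.getVert i = A[i] := by
  have hlen : i < p.support.length := by rw [hsplit]; simp; omega
  rw [← support_getElem p i hlen]
  have : p.support[i]'hlen = (A ++ B)[i]'(by rw [← hsplit]; exact hlen) := by
    congr 1
  rw [this, List.getElem_append_left hi]

/-- If `p.support = A ++ B` then `p.getVert (A.length + j) = B[j]` for `j < B.length`. -/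
lemma getVert_split_right {p : G.Walk x y} {A B : List V} (hsplit : p.support = A ++ B)
    {j : ℕ} (hj : j < B.length) : p.getVert (A.length + j) = B[j] := by
  have hlen : A.length + j < p.support.length := by rw [hsplit]; simp; omega
  rw [← support_getElem p _ hlen]
  have : p.support[A.length + j]'hlen = (A ++ B)[A.length + j]'(by rw [← hsplit]; exact hlen) := by
    congr 1
  rw [this]
  rw [List.getElem_append_right] <;> simp

/-- The successor of `s` on the walk `p`. -/
def nxt [DecidableEq V] (p : G.Walk x y) (s : V) : V :=
  if hs : s ∈ p.support then p.getVert ((p.takeUntil s hs).length + 1) else x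

lemma nxt_spec [DecidableEq V] {p : G.Walk x y} (hp : p.IsPath) {s : V}
    (hs : s ∈ p.support) (hsy : s ≠ y) :
    ∃ (T : G.Walk x s) (_ : G.Adj s (nxt p s)) (D : G.Walk (nxt p s) y),
      p.support = T.support ++ D.support ∧ p.length = T.length + 1 + D.length ∧
      nxt p s = p.getVert (T.length + 1) ∧ s = p.getVert T.length ∧
      T = p.takeUntil s hs := by
  obtain ⟨a, hadj, D, hD⟩ := Walk.exists_eq_cons_of_ne hsy (p.dropUntil s hs)
  set T := p.takeUntil s hs with hT
  have hspec : T.append (p.dropUntil s hs) = p := Walk.take_spec p hs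
  have hsplit : p.support = T.support ++ D.support := by
    rw [← hspec, Walk.support_append, hD, Walk.support_cons, List.tail_cons]
  have hlen : p.length = T.length + 1 + D.length := by
    have := congrArg Walk.length hspec
    rw [Walk.length_append, hD, Walk.length_cons] at this
    omega
  have hTlen : T.support.length = T.length + 1 := Walk.length_support T
  have ha : a = p.getVert (T.length + 1) := by
    have h0 : (0:ℕ) < D.support.length := by simp
    have h1 : p.getVert (T.support.length + 0) = D.support[0]'h0 :=
      getVert_split_right hsplit h0
    rw [support_getElem D 0 h0, Walk.getVert_zero] at h1
    rw [← h1, hTlen]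
  have hnxt : nxt p s = a := by
    rw [nxt, dif_pos hs, ← hT]
    exact ha.symm
  have hsget : s = p.getVert T.length := by
    have h1 : p.getVert T.length = T.support[T.length]'(by omega) :=
      getVert_split_left hsplit (by omega)
    rw [h1, support_getElem T T.length (by omega), Walk.getVert_length]
  rw [hnxt]
  exact ⟨T, hadj, D, hsplit, hlen, ha, hsget, rfl⟩
lemma too_long {p : G.Walk x y} (hxf : IsXFiber G p) {z : V} (W : G.Walk x z)
    (hW : W.IsPath) (h : p.length < W.length) : False :=
  absurd (hxf.2 z W hW) (Nat.not_le.mpr h)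

lemma y_not_adj {p : G.Walk x y} (hxf : IsXFiber G p) {z : V} (hz : z ∉ p.support) :
    ¬ G.Adj y z := by
  intro hadj
  refine too_long hxf (p.append (Walk.cons hadj Walk.nil)) ?_ (by simp)
  rw [Walk.isPath_def, Walk.support_append, Walk.support_cons, List.tail_cons,
    Walk.support_nil]
  simp only [List.nodup_append, List.nodup_cons, List.nodup_nil]
  refine ⟨(Walk.isPath_def p).mp hxf.1, by simp, ?_⟩
  intro v hv w hv2 hvw; rw [← hvw] at hv2
  simp only [List.mem_singleton] at hv2
  exact hz (hv2 ▸ hv)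

lemma claim4 [DecidableEq V] {p : G.Walk x y} (hxf : IsXFiber G p) {s : V}
    (hs : s ∈ p.support) (hsy : s ≠ y) {h1 h2 : V} (hadj1 : G.Adj s h1)
    (Q : G.Walk h1 h2) (hQ : Q.IsPath) (hQs : ∀ v ∈ Q.support, v ∉ p.support)
    (hadj2 : G.Adj h2 (nxt p s)) : False := by
  obtain ⟨T, hadjT, D, hsplit, hlen, -, -, -⟩ := nxt_spec hxf.1 hs hsy
  have hnd : (T.support ++ D.support).Nodup := by
    rw [← hsplit]; exact (Walk.isPath_def p).mp hxf.1
  have hTp : ∀ v ∈ T.support, v ∈ p.support := by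
    intro v hv; rw [hsplit]; exact List.mem_append.mpr (Or.inl hv)
  have hDp : ∀ v ∈ D.support, v ∈ p.support := by
    intro v hv; rw [hsplit]; exact List.mem_append.mpr (Or.inr hv)
  rw [List.nodup_append] at hnd
  refine too_long hxf (T.append (Walk.cons hadj1 (Q.append (Walk.cons hadj2 D)))) ?_ ?_
  · rw [Walk.isPath_def, Walk.support_append, Walk.support_cons, List.tail_cons,
      Walk.support_append, Walk.support_cons, List.tail_cons]
    rw [List.nodup_append, List.nodup_append]
    refine ⟨hnd.1, ⟨(Walk.isPath_def Q).mp hQ, hnd.2.1, ?_⟩, ?_⟩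
    · intro v hv w hv2 hvw; rw [← hvw] at hv2
      exact hQs v hv (hDp v hv2)
    · intro v hv w hv2 hvw; rw [← hvw] at hv2
      rcases List.mem_append.mp hv2 with h | h
      · exact hQs v h (hTp v hv)
      · exact hnd.2.2 v hv v h rfl
  · rw [Walk.length_append, Walk.length_cons, Walk.length_append, Walk.length_cons]
    omega
lemma claim5 [DecidableEq V] {p : G.Walk x y} (hxf : IsXFiber G p) {s t : V}
    (hs : s ∈ p.support) (hsy : s ≠ y) (ht : t ∈ p.support) (hty : t ≠ y)
    (horder : (p.takeUntil s hs).length < (p.takeUntil t ht).length)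
    {h1 h2 : V} (hadj1 : G.Adj s h1) (Q : G.Walk h1 h2) (hQ : Q.IsPath)
    (hQs : ∀ v ∈ Q.support, v ∉ p.support) (hadj2 : G.Adj h2 t)
    (hadjn : G.Adj (nxt p s) (nxt p t)) : False := by
  obtain ⟨Ts, hadjTs, Ds, hsplit_s, hlen_s, hnxt_s, hsget, hTs⟩ := nxt_spec hxf.1 hs hsy
  obtain ⟨Tt, hadjTt, Dt, hsplit_t, hlen_t, hnxt_t, htget, hTt⟩ := nxt_spec hxf.1 ht hty
  rw [← hTs, ← hTt] at horder
  -- `t` lies on `Ds`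
  have htDs : t ∈ Ds.support := by
    have hmem : t ∈ Ts.support ++ Ds.support := hsplit_s ▸ ht
    rcases List.mem_append.mp hmem with h | h
    · exfalso
      obtain ⟨j, hj, hjt⟩ := List.mem_iff_getElem.mp h
      have h1' : p.getVert j = t := by
        rw [getVert_split_left hsplit_s hj, hjt]
      have hjlen : j ≤ Ts.length := by
        have := Walk.length_support Ts; omega
      have : j = Tt.length := getVert_inj hxf.1 (by omega) (by omega)
        (h1'.trans htget)
      omega
    · exact h
  -- decompose `Ds` at `t`
  obtain ⟨a', hadj', D', hD'⟩ := Walk.exists_eq_cons_of_ne hty (Ds.dropUntil t htDs)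
  set M := Ds.takeUntil t htDs with hM
  have hspec2 : M.append (Ds.dropUntil t htDs) = Ds := Walk.take_spec Ds htDs
  have hsplit2 : Ds.support = M.support ++ D'.support := by
    rw [← hspec2, Walk.support_append, hD', Walk.support_cons, List.tail_cons]
  have hlen2 : Ds.length = M.length + 1 + D'.length := by
    have := congrArg Walk.length hspec2
    rw [Walk.length_append, hD', Walk.length_cons] at this
    omega
  have hsplit3 : p.support = (Ts.support ++ M.support) ++ D'.support := by
    rw [hsplit_s, hsplit2, List.append_assoc]
  have hTsMlen : (Ts.support ++ M.support).length = Ts.length + 1 + (M.length + 1) := by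
    rw [List.length_append, Walk.length_support, Walk.length_support]
  -- identify `a'` with `nxt p t`
  have htidx : t = p.getVert (Ts.length + 1 + M.length) := by
    have hjM : M.length < M.support.length := by rw [Walk.length_support]; omega
    have h1' : p.getVert (Ts.support.length + M.length)
        = (M.support ++ D'.support)[M.length]'(by rw [List.length_append]; omega) := by
      have := getVert_split_right (B := M.support ++ D'.support)
        (by rw [hsplit_s, hsplit2]) (j := M.length) (by rw [List.length_append]; omega)
      exact this
    rw [List.getElem_append_left hjM, support_getElem M M.length hjM,
      Walk.getVert_length] at h1'
    rw [Walk.length_support] at h1'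
    exact h1'.symm
  have ha' : a' = p.getVert (Ts.length + 1 + M.length + 1) := by
    have h0 : (0:ℕ) < D'.support.length := by simp
    have h1' : p.getVert ((Ts.support ++ M.support).length + 0) = D'.support[0]'h0 :=
      getVert_split_right hsplit3 h0
    rw [support_getElem D' 0 h0, Walk.getVert_zero, hTsMlen] at h1'
    rw [← h1']; congr 1
  have hTtlen : Tt.length = Ts.length + 1 + M.length := by
    refine getVert_inj hxf.1 (by omega) (by omega) (htget.symm.trans htidx)
  have hnxt_t' : nxt p t = a' := by
    rw [hnxt_t, hTtlen, ha']
  have hadjn' : G.Adj (nxt p s) a' := hnxt_t' ▸ hadjn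
  -- the rerouted walk
  refine too_long hxf
    (Ts.append (Walk.cons hadj1 (Q.append (Walk.cons hadj2
      ((M.reverse).append (Walk.cons hadjn' D')))))) ?_ ?_
  · rw [Walk.isPath_def, Walk.support_append, Walk.support_cons, List.tail_cons,
      Walk.support_append, Walk.support_cons, List.tail_cons,
      Walk.support_append, Walk.support_reverse, Walk.support_cons, List.tail_cons]
    have hnd : ((Ts.support ++ M.support) ++ D'.support).Nodup := by
      rw [← hsplit3]; exact (Walk.isPath_def p).mp hxf.1
    have hmemp : ∀ v, v ∈ Ts.support ∨ v ∈ M.support ∨ v ∈ D'.support → v ∈ p.support := by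
      intro v hv
      rw [hsplit3]
      rcases hv with h | h | h
      · exact List.mem_append.mpr (Or.inl (List.mem_append.mpr (Or.inl h)))
      · exact List.mem_append.mpr (Or.inl (List.mem_append.mpr (Or.inr h)))
      · exact List.mem_append.mpr (Or.inr h)
    rw [List.append_assoc, List.nodup_append, List.nodup_append] at hnd
    obtain ⟨hndTs, ⟨hndM, hndD', hdisMD⟩, hdisTs⟩ := hnd
    rw [List.nodup_append, List.nodup_append, List.nodup_append]
    refine ⟨hndTs, ⟨(Walk.isPath_def Q).mp hQ, ⟨by simpa using hndM, hndD', ?_⟩, ?_⟩, ?_⟩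
    · intro v hv w hv2 hvw; rw [← hvw] at hv2
      exact hdisMD v (by simpa using hv) v hv2 rfl
    · intro v hv w hv2 hvw; rw [← hvw] at hv2
      refine hQs v hv (hmemp v ?_)
      rcases List.mem_append.mp hv2 with h | h
      · exact Or.inr (Or.inl (by simpa using h))
      · exact Or.inr (Or.inr h)
    · intro v hv w hv2 hvw; rw [← hvw] at hv2
      rcases List.mem_append.mp hv2 with h | h
      · exact hQs v h (hmemp v (Or.inl hv))
      · rcases List.mem_append.mp h with h' | h'
        · exact hdisTs v hv v (List.mem_append.mpr (Or.inl (by simpa using h'))) rfl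
        · exact hdisTs v hv v (List.mem_append.mpr (Or.inr h')) rfl
  · rw [Walk.length_append, Walk.length_cons, Walk.length_append, Walk.length_cons,
      Walk.length_append, Walk.length_reverse, Walk.length_cons]
    omega
end XFiberAux

open XFiberAux

/-- If `P` is an `x`-fiber in `G` and `H` is a component of `G - V(P)` with `k`
attachment points, then there is an independent set `A ⊆ V(P) - {x}` with
`|A| ≥ k` and no edge between `A` and `H`. -/
theorem indep_set_of_x_fiber
    {V : Type} [Fintype V] (G : SimpleGraph V) {x y : V}
    (p : G.Walk x y) (hp : IsXFiber G p)
    (C : (G.induce {v : V | v ∉ p.support}).ConnectedComponent) :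
    ∃ A : Finset V,
      (∀ a ∈ A, ∀ b ∈ A, a ≠ b → ¬ G.Adj a b) ∧
      (∀ a ∈ A, a ∈ p.support ∧ a ≠ x) ∧
      (attachPoints G p C).ncard ≤ A.card ∧
      (∀ a ∈ A, ∀ h : {v : V | v ∉ p.support},
        (G.induce {v : V | v ∉ p.support}).connectedComponentMk h = C → ¬ G.Adj a ↑h) := by
  classical
  -- walks inside the component, mapped to `G`
  have hcomp : ∀ (h1 h2 : {v : V | v ∉ p.support}),
      (G.induce {v : V | v ∉ p.support}).connectedComponentMk h1 = C →
      (G.induce {v : V | v ∉ p.support}).connectedComponentMk h2 = C →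
      ∃ Q : G.Walk ↑h1 ↑h2, Q.IsPath ∧ ∀ v ∈ Q.support, v ∉ p.support := by
    intro h1 h2 e1 e2
    have hr : (G.induce {v : V | v ∉ p.support}).Reachable h1 h2 :=
      ConnectedComponent.exact (e1.trans e2.symm)
    obtain ⟨w⟩ := hr
    refine ⟨(w.toPath : (G.induce {v : V | v ∉ p.support}).Walk h1 h2).map
      (Embedding.induce {v : V | v ∉ p.support}).toHom, ?_, ?_⟩
    · exact Walk.map_isPath_of_injective
        (Embedding.induce (G := G) {v : V | v ∉ p.support}).injective w.toPath.2
    · intro v hv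
      replace hv : v ∈ ((w.toPath : (G.induce {v : V | v ∉ p.support}).Walk h1 h2).map
          (Embedding.induce {v : V | v ∉ p.support}).toHom).support := hv
      rw [Walk.support_map] at hv
      obtain ⟨u, hu, rfl⟩ := List.mem_map.mp hv
      exact u.2
  -- attachment points are on `p` and differ from `y`
  have hattach : ∀ s ∈ attachPoints G p C, s ∈ p.support ∧ s ≠ y := by
    intro s hsA
    obtain ⟨hs, h', hC, hadj⟩ := hsA
    refine ⟨hs, ?_⟩
    rintro rfl
    exact y_not_adj hp h'.2 hadj.symm
  -- basic facts about successors of attachment points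
  have hspec : ∀ s ∈ attachPoints G p C, ∃ T : G.Walk x s,
      nxt p s = p.getVert (T.length + 1) ∧ s = p.getVert T.length ∧
      T.length + 1 ≤ p.length ∧ ∀ hmem : s ∈ p.support, T = p.takeUntil s hmem := by
    intro s hsA
    obtain ⟨hs, hsy⟩ := hattach s hsA
    obtain ⟨T, -, D, -, hlen, hnxt, hsget, hT⟩ := nxt_spec hp.1 hs hsy
    exact ⟨T, hnxt, hsget, by omega, fun _ => hT⟩
  have hinj : ∀ s ∈ attachPoints G p C, ∀ t ∈ attachPoints G p C,
      nxt p s = nxt p t → s = t := by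
    intro s hsA t htA he
    obtain ⟨Ts, hnxts, hsget, hbs, -⟩ := hspec s hsA
    obtain ⟨Tt, hnxtt, htget, hbt, -⟩ := hspec t htA
    have : Ts.length + 1 = Tt.length + 1 :=
      getVert_inj hp.1 (by omega) (by omega) (by rw [← hnxts, ← hnxtt, he])
    rw [hsget, htget]
    congr 1
    omega
  refine ⟨((Set.toFinite (attachPoints G p C)).toFinset).image (nxt p), ?_, ?_, ?_, ?_⟩
  · -- independence
    intro a ha b hb hab hadj
    simp only [Finset.mem_image, Set.Finite.mem_toFinset] at ha hb
    obtain ⟨s, hsA, rfl⟩ := ha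
    obtain ⟨t, htA, rfl⟩ := hb
    have hst : s ≠ t := fun h => hab (by rw [h])
    obtain ⟨hs, hsy⟩ := hattach s hsA
    obtain ⟨ht, hty⟩ := hattach t htA
    obtain ⟨Ts, hnxts, hsget, hbs, hTs⟩ := hspec s hsA
    obtain ⟨Tt, hnxtt, htget, hbt, hTt⟩ := hspec t htA
    obtain ⟨-, hs', hsC, hsadj⟩ := hsA
    obtain ⟨-, ht', htC, htadj⟩ := htA
    have hlt : Ts.length ≠ Tt.length := by
      intro h
      exact hst (by rw [hsget, htget, h])
    rcases Nat.lt_or_ge Ts.length Tt.length with hlt' | hge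
    · obtain ⟨Q, hQ, hQs⟩ := hcomp hs' ht' hsC htC
      exact claim5 hp hs hsy ht hty (by rw [← hTs hs, ← hTt ht]; exact hlt')
        hsadj.symm Q hQ hQs htadj hadj
    · obtain ⟨Q, hQ, hQs⟩ := hcomp ht' hs' htC hsC
      exact claim5 hp ht hty hs hsy (by rw [← hTs hs, ← hTt ht]; omega)
        htadj.symm Q hQ hQs hsadj hadj.symm
  · -- membership and avoiding `x`
    intro a ha
    simp only [Finset.mem_image, Set.Finite.mem_toFinset] at ha
    obtain ⟨s, hsA, rfl⟩ := ha
    obtain ⟨Ts, hnxts, hsget, hbs, -⟩ := hspec s hsA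
    constructor
    · exact Walk.mem_support_iff_exists_getVert.mpr ⟨Ts.length + 1, hnxts.symm, by omega⟩
    · intro h
      have : Ts.length + 1 = 0 := getVert_inj hp.1 (by omega) (by omega)
        (by rw [← hnxts, h, Walk.getVert_zero])
      omega
  · -- cardinality
    rw [Set.ncard_eq_toFinset_card (attachPoints G p C) (Set.toFinite _)]
    refine le_of_eq (Finset.card_image_of_injOn ?_).symm
    intro s hsA t htA he
    simp only [Finset.mem_coe, Set.Finite.mem_toFinset] at hsA htA
    exact hinj s hsA t htA he
  · -- no edges to the component
    intro a ha h hC hadj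
    simp only [Finset.mem_image, Set.Finite.mem_toFinset] at ha
    obtain ⟨s, hsA, rfl⟩ := ha
    obtain ⟨hs, hsy⟩ := hattach s hsA
    obtain ⟨-, h', hC', hadj'⟩ := hsA
    obtain ⟨Q, hQ, hQs⟩ := hcomp h' h hC' hC
    exact claim4 hp hs hsy hadj'.symm Q hQ hQs hadj.symm
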